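/- Define, for a positive integer n, the density ℓ⁽ⁿ⁾ on [0,1] by ℓ⁽ⁿ⁾(x) = 3/2 on [0, 1/(2n)), 1/2 on [1/(2n), 1/n), and 1 on [1/n, 1]. Then for any interval I ⊆ [0,1] with ∫_I ℓ⁽ⁿ⁾ ≥ 1/n, the Lebesgue measure of I is at least 1/n. -/
import Mathlib


open MeasureTheory Set intervalIntegral

/-- The density `ℓ⁽ⁿ⁾`: `3/2` on `[0, 1/(2n))`, `1/2` on `[1/(2n), 1/n)`, `1` on `[1/n, 1]`. -/
noncomputable def ell (n : ℕ) : ℝ → ℝ := fun x =>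
  if x < 1 / (2 * n) then 3/2 else if x < 1 / n then 1/2 else 1

/-- An antiderivative of `ell n`. -/
noncomputable def ellF (n : ℕ) : ℝ → ℝ := fun x =>
  if x < 1 / (2 * n) then 3/2 * x else if x < 1 / n then x/2 + 1 / (2 * n) else x

/-- Any interval `I = [a,b] ⊆ [0,1]` with `∫_I ℓ⁽ⁿ⁾ ≥ 1/n` has length at least `1/n`. -/
theorem ell_proportional_implies_length (n : ℕ) (hn : 1 ≤ n) (a b : ℝ)
    (ha : 0 ≤ a) (hab : a ≤ b) (hb : b ≤ 1)
    (hval : (∫ x in a..b, ell n x) ≥ 1 / n) :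
    b - a ≥ 1 / n := by
  have hn0 : (0:ℝ) < n := by exact_mod_cast hn
  have hc : (0:ℝ) < 1 / (2 * n) := by positivity
  have hcd : (1:ℝ) / (2 * n) < 1 / n := by
    rw [div_lt_div_iff₀ (by linarith) hn0]; linarith
  have hd2 : (1:ℝ) / n = 2 * (1 / (2 * n)) := by field_simp
  -- continuity of the antiderivative
  have hcont : Continuous (ellF n) := by
    unfold ellF
    apply Continuous.if
    · intro x hx
      have hfr : frontier {x : ℝ | x < 1 / (2 * (n:ℝ))} = {1 / (2 * (n:ℝ))} := frontier_Iio
      rw [hfr] at hx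
      simp only [mem_singleton_iff] at hx
      subst hx
      rw [if_pos hcd]; ring
    · fun_prop
    · apply Continuous.if
      · intro x hx
        have hfr : frontier {x : ℝ | x < 1 / (n:ℝ)} = {1 / (n:ℝ)} := frontier_Iio
        rw [hfr] at hx
        simp only [mem_singleton_iff] at hx
        subst hx
        linarith
      · fun_prop
      · fun_prop
  -- measurability / integrability of ell
  have hmeas : Measurable (ell n) := by
    unfold ell
    exact Measurable.ite measurableSet_Iio measurable_const
      (Measurable.ite measurableSet_Iio measurable_const measurable_const)
  have hint : IntervalIntegrable (ell n) volume a b := by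
    refine (_root_.intervalIntegrable_const (μ := volume) (a := a) (b := b)
      (c := (3/2:ℝ))).mono_fun hmeas.aestronglyMeasurable.restrict ?_
    filter_upwards with y
    simp only [Real.norm_eq_abs, ell]
    split_ifs <;> norm_num [abs_of_nonneg]
  -- the derivative condition
  have hderiv : ∀ x ∈ Set.Ioo a b, HasDerivWithinAt (ellF n) (ell n x) (Set.Ioi x) x := by
    intro x _
    rcases lt_trichotomy x (1 / (2 * (n:ℝ))) with h1 | h1 | h1
    · have hx : ell n x = 3/2 := if_pos h1
      rw [hx]
      have hg : HasDerivAt (fun y : ℝ => 3/2 * y) (3/2) x := by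
        simpa using (hasDerivAt_id x).const_mul (3/2 : ℝ)
      apply HasDerivAt.hasDerivWithinAt
      apply hg.congr_of_eventuallyEq
      filter_upwards [Iio_mem_nhds h1] with y hy
      have hy' : y < 1 / (2 * (n:ℝ)) := hy
      simp only [ellF]; rw [if_pos hy']
    · -- x = 1/(2n)
      have hxlt : ¬ x < 1 / (2 * (n:ℝ)) := by rw [h1]; exact lt_irrefl _
      have hxd : x < 1 / (n:ℝ) := by rw [h1]; exact hcd
      have hx : ell n x = 1/2 := by
        simp only [ell]; rw [if_neg hxlt, if_pos hxd]
      rw [hx]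
      have hg : HasDerivWithinAt (fun y : ℝ => y/2 + 1 / (2 * (n:ℝ))) (1/2)
          (Set.Ioi x) x := by
        simpa using (((hasDerivAt_id x).div_const 2).add_const
          (1 / (2 * (n:ℝ)))).hasDerivWithinAt
      refine hg.congr_of_eventuallyEq ?_ ?_
      · have hmem : Set.Ioo (1 / (2 * (n:ℝ))) (1 / (n:ℝ)) ∈ nhdsWithin x (Set.Ioi x) := by
          rw [h1]; exact Ioo_mem_nhdsGT_of_mem ⟨le_refl _, hcd⟩
        filter_upwards [hmem] with y hy
        simp only [ellF]; rw [if_neg (not_lt.2 hy.1.le), if_pos hy.2]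
      · simp only [ellF]; rw [if_neg hxlt, if_pos hxd]
    · rcases lt_trichotomy x (1 / (n:ℝ)) with h2 | h2 | h2
      · have hx : ell n x = 1/2 := by
          simp only [ell]; rw [if_neg (not_lt.2 h1.le), if_pos h2]
        rw [hx]
        have hg : HasDerivAt (fun y : ℝ => y/2 + 1 / (2 * (n:ℝ))) (1/2) x := by
          simpa using ((hasDerivAt_id x).div_const 2).add_const (1 / (2 * (n:ℝ)))
        apply HasDerivAt.hasDerivWithinAt
        apply hg.congr_of_eventuallyEq
        filter_upwards [Ioo_mem_nhds h1 h2] with y hy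
        simp only [ellF]; rw [if_neg (not_lt.2 hy.1.le), if_pos hy.2]
      · -- x = 1/n
        have hxc : ¬ x < 1 / (2 * (n:ℝ)) := by rw [h2]; exact not_lt.2 hcd.le
        have hxd : ¬ x < 1 / (n:ℝ) := by rw [h2]; exact lt_irrefl _
        have hx : ell n x = 1 := by
          simp only [ell]; rw [if_neg hxc, if_neg hxd]
        rw [hx]
        have hg : HasDerivWithinAt (fun y : ℝ => y) 1 (Set.Ioi x) x :=
          (hasDerivAt_id x).hasDerivWithinAt
        refine hg.congr_of_eventuallyEq ?_ ?_
        · filter_upwards [self_mem_nhdsWithin] with y hy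
          have hy' : x < y := hy
          have hdy : 1 / (n:ℝ) < y := by rw [← h2]; exact hy'
          simp only [ellF]
          rw [if_neg (not_lt.2 (hcd.trans hdy).le), if_neg (not_lt.2 hdy.le)]
        · simp only [ellF]; rw [if_neg hxc, if_neg hxd]
      · have hx : ell n x = 1 := by
          simp only [ell]; rw [if_neg (not_lt.2 h1.le), if_neg (not_lt.2 h2.le)]
        rw [hx]
        have hg : HasDerivAt (fun y : ℝ => y) 1 x := hasDerivAt_id x
        apply HasDerivAt.hasDerivWithinAt
        apply hg.congr_of_eventuallyEq
        filter_upwards [Ioi_mem_nhds h2] with y hy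
        have hdy : 1 / (n:ℝ) < y := hy
        simp only [ellF]
        rw [if_neg (not_lt.2 (hcd.trans hdy).le), if_neg (not_lt.2 hdy.le)]
  have key : (∫ x in a..b, ell n x) = ellF n b - ellF n a :=
    intervalIntegral.integral_eq_sub_of_hasDeriv_right_of_le hab
      hcont.continuousOn hderiv hint
  rw [key] at hval
  simp only [ellF] at hval
  split_ifs at hval <;> linarith
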